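/- arXiv:2503.05690 — 3 statements merged into one kernel-verified Lean document; each statement's English description precedes it below -/
import Mathlib

section
/- Let φ extend holomorphically near the unit circle, map S¹ to S¹, with φ' nonvanishing on S¹. Then for every z = e^{iθ} on S¹, Re(−z²·(φ''(z)/φ'(z))²) = |φ''(z)/φ'(z)|² + 4·Re(z·φ''(z)/φ'(z)) + 2 − 2|φ'(z)|². -/
open Complex

private lemma hasDerivAt_circ (t : ℝ) :
    HasDerivAt (fun s : ℝ => Complex.exp (s * I)) (Complex.exp (t * I) * I) t := by
  have h : HasDerivAt (fun w : ℂ => Complex.exp (w * I)) (Complex.exp ((t:ℂ) * I) * I) (t:ℂ) := by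
    simpa using ((hasDerivAt_id ((t:ℂ))).mul_const I).cexp
  exact h.comp_ofReal

private lemma abs_circ (t : ℝ) : ‖Complex.exp (t * I)‖ = 1 := by
  simpa using Complex.norm_exp_ofReal_mul_I t

private lemma im_B_zero (φ : ℂ → ℂ)
    (hφ : ∀ w : ℂ, ‖w‖ = 1 → AnalyticAt ℂ φ w)
    (hmap : ∀ w : ℂ, ‖w‖ = 1 → ‖φ w‖ = 1)
    (z : ℂ) (hz : ‖z‖ = 1) :
    (z * deriv φ z / φ z).im = 0 := by
  set θ := Complex.arg z with hθ
  have hze : Complex.exp ((θ:ℂ) * I) = z := by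
    have h := Complex.norm_mul_exp_arg_mul_I z
    rwa [hz, Complex.ofReal_one, one_mul] at h
  have hc := hasDerivAt_circ θ
  rw [hze] at hc
  have hu : HasDerivAt (fun t : ℝ => φ (Complex.exp (t * I))) ((z * I) • deriv φ z) θ :=
    (hφ z hz).differentiableAt.hasDerivAt.scomp_of_eq θ hc hze.symm
  have hconj : HasDerivAt (fun t : ℝ => star (φ (Complex.exp (t * I))))
      (star ((z * I) • deriv φ z)) θ := hu.star
  have hv := hu.mul hconj
  have hfun : (fun t : ℝ => φ (Complex.exp (t * I)) * star (φ (Complex.exp (t * I))))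
      = fun _ => (1:ℂ) := by
    funext t
    have h1 := hmap _ (abs_circ t)
    simp only [Complex.star_def, Complex.mul_conj]
    rw [Complex.normSq_eq_norm_sq, h1]
    norm_num
  change HasDerivAt (fun t : ℝ => φ (Complex.exp (t * I)) * star (φ (Complex.exp (t * I)))) _ θ at hv
  rw [hfun, hze] at hv
  have h0 := (hasDerivAt_const θ (1:ℂ)).unique hv
  -- h0 : 0 = (z*I) • P * star (φ z) + φ z * star ((z*I) • P)
  set P := deriv φ z with hP
  set F := φ z with hF
  have hFne : F ≠ 0 := by
    intro h; have := hmap z hz; rw [hF] at h; rw [h] at this; simp at this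
  have hzne : z ≠ 0 := by
    intro h; rw [h] at hz; simp at hz
  have hFconj : (starRingEnd ℂ) F * F = 1 := by
    rw [mul_comm, Complex.mul_conj, Complex.normSq_eq_norm_sq, hmap z hz]; norm_num
  have hzconj : (starRingEnd ℂ) z * z = 1 := by
    rw [mul_comm, Complex.mul_conj, Complex.normSq_eq_norm_sq, hz]; norm_num
  have h0' : (0:ℂ) = (z * I * P) * (starRingEnd ℂ) F
      + F * ((starRingEnd ℂ) z * (-I) * (starRingEnd ℂ) P) := by
    simpa [smul_eq_mul, Complex.star_def, map_mul, Complex.conj_I, mul_comm, mul_left_comm,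
      mul_assoc] using h0
  have hstep : z * P * (starRingEnd ℂ) F = (starRingEnd ℂ) z * (starRingEnd ℂ) P * F := by
    have hI : I * (z * P * (starRingEnd ℂ) F - (starRingEnd ℂ) z * (starRingEnd ℂ) P * F) = 0 := by
      linear_combination -h0'
    have := mul_eq_zero.mp hI
    rcases this with h | h
    · exact absurd h Complex.I_ne_zero
    · linear_combination h
  rw [← Complex.conj_eq_iff_im, map_div₀, map_mul]
  have hFinv : (starRingEnd ℂ) F = F⁻¹ := eq_inv_of_mul_eq_one_left hFconj
  have hzinv : (starRingEnd ℂ) z = z⁻¹ := eq_inv_of_mul_eq_one_left hzconj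
  rw [div_eq_div_iff ((map_ne_zero _).mpr hFne) hFne]
  linear_combination -hstep

private lemma analyticAt_deriv' {f : ℂ → ℂ} {x : ℂ} (h : AnalyticAt ℂ f x) :
    AnalyticAt ℂ (deriv f) x :=
  ((ContinuousLinearMap.apply ℂ ℂ (1:ℂ)).analyticAt _).comp h.fderiv

private lemma tangent_im (g : ℂ → ℂ) (z : ℂ) (hz : ‖z‖ = 1)
    (hg : DifferentiableAt ℂ g z)
    (him : ∀ w : ℂ, ‖w‖ = 1 → (g w).im = 0) :
    (z * deriv g z).re = 0 := by
  set θ := Complex.arg z with hθ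
  have hze : Complex.exp ((θ:ℂ) * I) = z := by
    have h := Complex.norm_mul_exp_arg_mul_I z
    rwa [hz, Complex.ofReal_one, one_mul] at h
  have hc := hasDerivAt_circ θ
  rw [hze] at hc
  have hu : HasDerivAt (fun t : ℝ => g (Complex.exp (t * I))) ((z * I) • deriv g z) θ :=
    hg.hasDerivAt.scomp_of_eq θ hc hze.symm
  have hIm : HasDerivAt (fun t : ℝ => (g (Complex.exp (t * I))).im)
      (Complex.imCLM ((z * I) • deriv g z)) θ :=
    Complex.imCLM.hasFDerivAt.comp_hasDerivAt θ hu
  have hfun : (fun t : ℝ => (g (Complex.exp (t * I))).im) = fun _ => 0 :=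
    funext fun t => him _ (abs_circ t)
  rw [hfun] at hIm
  have h0 := (hasDerivAt_const θ (0:ℝ)).unique hIm
  have h1 : (z * I * deriv g z).im = 0 := by
    simpa [smul_eq_mul] using h0.symm
  simp only [Complex.mul_im, Complex.mul_re, Complex.I_re, Complex.I_im] at h1 ⊢
  linarith [h1]

/-- For `φ` holomorphic near the unit circle mapping the circle to itself with
nonvanishing derivative, at every point `z` of the unit circle:
`Re(−z²·(φ''/φ')²) = |φ''/φ'|² + 4·Re(z·φ''/φ') + 2 − 2|φ'|²`. -/
theorem second_log_deriv_identity_on_circle (φ : ℂ → ℂ)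
    (hφ : ∀ w : ℂ, ‖w‖ = 1 → AnalyticAt ℂ φ w)
    (hmap : ∀ w : ℂ, ‖w‖ = 1 → ‖φ w‖ = 1)
    (hd : ∀ w : ℂ, ‖w‖ = 1 → deriv φ w ≠ 0)
    (z : ℂ) (hz : ‖z‖ = 1) :
    (-(z ^ 2 * (deriv (deriv φ) z / deriv φ z) ^ 2)).re
      = ‖deriv (deriv φ) z / deriv φ z‖ ^ 2
        + 4 * (z * deriv (deriv φ) z / deriv φ z).re
        + 2 - 2 * ‖deriv φ z‖ ^ 2 := by
  set P := deriv φ z with hPdef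
  set Q := deriv (deriv φ) z with hQdef
  set F := φ z with hFdef
  have hPne : P ≠ 0 := hd z hz
  have hFne : F ≠ 0 := by
    intro h
    have := hmap z hz
    rw [← hFdef, h] at this
    simp at this
  -- second derivative
  have hQder : HasDerivAt (deriv φ) Q z :=
    (analyticAt_deriv' (hφ z hz)).differentiableAt.hasDerivAt
  have hPder : HasDerivAt φ P z := (hφ z hz).differentiableAt.hasDerivAt
  -- the logarithmic-derivative type function g
  set g : ℂ → ℂ := fun w => w * deriv φ w / φ w with hgdef
  have hgD : HasDerivAt g (((1 * P + z * Q) * F - z * P * P) / F ^ 2) z :=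
    ((hasDerivAt_id z).mul hQder).div hPder hFne
  have him : ∀ w : ℂ, ‖w‖ = 1 → (g w).im = 0 :=
    fun w hw => im_B_zero φ hφ hmap w hw
  have htan := tangent_im g z hz hgD.differentiableAt him
  rw [hgD.deriv] at htan
  set B : ℂ := z * P / F with hBdef
  set A : ℂ := z * Q / P with hAdef
  have hBim : B.im = 0 := im_B_zero φ hφ hmap z hz
  have hBabs : ‖B‖ = ‖P‖ := by
    rw [hBdef, norm_div, norm_mul, hz, hmap z hz, one_mul, div_one]
  have hBre2 : B.re ^ 2 = ‖P‖ ^ 2 := by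
    rw [← hBabs, Complex.sq_norm, Complex.normSq_apply, hBim]
    ring
  have hexpr : z * ((((1 * P + z * Q) * F - z * P * P) / F ^ 2)) = B + A * B - B ^ 2 := by
    rw [hBdef, hAdef]
    field_simp
  rw [hexpr] at htan
  have htan' : B.re + A.re * B.re - B.re * B.re = 0 := by
    simpa [Complex.add_re, Complex.sub_re, Complex.mul_re, pow_two, hBim] using htan
  have hBre_ne : B.re ≠ 0 := by
    intro h
    rw [h] at hBre2
    have : ‖P‖ = 0 := by nlinarith [norm_nonneg P]
    exact hPne (by simpa using this)
  have hA : A.re = B.re - 1 := by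
    have h2 : B.re * A.re = B.re * (B.re - 1) := by linear_combination htan'
    exact mul_left_cancel₀ hBre_ne h2
  have e1 : -(z ^ 2 * (Q / P) ^ 2) = -(A ^ 2) := by
    rw [hAdef]; ring
  have e2 : ‖Q / P‖ = ‖A‖ := by
    rw [hAdef, mul_div_assoc, norm_mul, hz, one_mul]
  rw [e1, e2]
  have e3 : ‖A‖ ^ 2 = A.re ^ 2 + A.im ^ 2 := by
    rw [Complex.sq_norm, Complex.normSq_apply]; ring
  have e4 : (-(A ^ 2)).re = -(A.re * A.re - A.im * A.im) := by
    simp [pow_two, Complex.mul_re]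
  rw [e4, e3, ← hBre2]
  linear_combination (-2 * (A.re + B.re + 1)) * hA
end

section
/- For every real A > 0, the limit as t → +∞ of e^t·(2π·sinh(t) − e^{-t}·A − J(2π(cosh(t) − 1) + e^{-t}·A)) equals −2A, where J(x) = 2π·sinh(cosh⁻¹(x/(2π) + 1)) is the hyperbolic isoperimetric profile. (The same holds for any real A, positive or not.) -/
open Real Filter

/-- The hyperbolic isoperimetric profile
`J(x) = 2π·sinh(cosh⁻¹(x/(2π) + 1)) = 2π·√((x/(2π)+1)² − 1)`. -/
noncomputable def isoPerimProfile (x : ℝ) : ℝ :=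
  2 * π * Real.sqrt ((x / (2 * π) + 1) ^ 2 - 1)

/-- Auxiliary closed form: the excess as a function of `x = e^{-2t}`. -/
noncomputable def phiAux (A x : ℝ) : ℝ :=
  -A - (2 * A * (1 + x) + A ^ 2 * x / π) /
    (2 * Real.sqrt (((1 + x) / 2 + A * x / (2 * π)) ^ 2 - x) + 1 - x)

lemma phiAux_zero (A : ℝ) : phiAux A 0 = -2 * A := by
  have h : ((1 + (0:ℝ)) / 2 + A * 0 / (2 * π)) ^ 2 - 0 = (1/2 : ℝ)^2 := by ring
  unfold phiAux
  rw [h, Real.sqrt_sq (by norm_num)]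
  ring

lemma phiAux_cont (A : ℝ) : ContinuousAt (phiAux A) 0 := by
  have hne : 2 * Real.sqrt (((1 + (0:ℝ)) / 2 + A * 0 / (2 * π)) ^ 2 - 0) + 1 - 0 ≠ 0 := by
    have h : ((1 + (0:ℝ)) / 2 + A * 0 / (2 * π)) ^ 2 - 0 = (1/2 : ℝ)^2 := by ring
    rw [h, Real.sqrt_sq (by norm_num)]
    norm_num
  apply ContinuousAt.sub continuousAt_const
  exact ContinuousAt.div (by fun_prop) (by fun_prop) hne

lemma key_eq (A t : ℝ) (ht : 0 < t)
    (hC : 1 ≤ Real.cosh t + Real.exp (-t) * A / (2 * π)) :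
    Real.exp t * (2 * π * Real.sinh t - Real.exp (-t) * A
      - isoPerimProfile (2 * π * (Real.cosh t - 1) + Real.exp (-t) * A))
    = phiAux A (Real.exp (-2 * t)) := by
  have hπ : (0:ℝ) < π := Real.pi_pos
  set u := Real.exp (-t) with hudef
  have hu0 : 0 < u := Real.exp_pos _
  have hu1 : u < 1 := by
    rw [hudef, Real.exp_lt_one_iff]; linarith
  have hE : Real.exp t = 1 / u := by
    rw [hudef, Real.exp_neg, one_div, inv_inv]
  have hu2 : Real.exp (-2 * t) = u ^ 2 := by
    rw [hudef, sq, ← Real.exp_add]; ring_nf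
  set C := Real.cosh t + u * A / (2 * π) with hCdef
  have hx : (2 * π * (Real.cosh t - 1) + u * A) / (2 * π) + 1 = C := by
    rw [hCdef]; field_simp; ring
  have hcosh : Real.cosh t = (1 / u + u) / 2 := by
    rw [Real.cosh_eq, ← hudef, hE]
  unfold isoPerimProfile
  rw [hx]
  set q := Real.sqrt (C ^ 2 - 1) with hqdef
  have hq0 : 0 ≤ q := Real.sqrt_nonneg _
  have hq2 : q ^ 2 = C ^ 2 - 1 := Real.sq_sqrt (by nlinarith)
  have hC' : C = (1 / u + u) / 2 + u * A / (2 * π) := by rw [hCdef, hcosh]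
  have hUC : (1 + u ^ 2) / 2 + A * u ^ 2 / (2 * π) = u * C := by
    rw [hC']; field_simp
  have hsq : Real.sqrt ((u * C) ^ 2 - u ^ 2) = u * q := by
    rw [show (u * C) ^ 2 - u ^ 2 = u ^ 2 * (C ^ 2 - 1) by ring,
      Real.sqrt_mul (sq_nonneg u), Real.sqrt_sq hu0.le, hqdef]
  unfold phiAux
  rw [hu2, hUC, hsq, hE, Real.sinh_eq, ← hudef, hE]
  have hq2' : q ^ 2 = ((1 / u + u) / 2 + u * A / (2 * π)) ^ 2 - 1 := by
    rw [hq2, hC']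
  have hD : 0 < 2 * (u * q) + 1 - u ^ 2 := by nlinarith [mul_nonneg hu0.le hq0]
  have hq2'' : (2 * π * u * q) ^ 2 = (π * (1 + u ^ 2) + u ^ 2 * A) ^ 2 - 4 * π ^ 2 * u ^ 2 := by
    rw [show (2 * π * u * q) ^ 2 = 4 * π ^ 2 * u ^ 2 * q ^ 2 by ring, hq2']
    field_simp
    ring
  field_simp [hD.ne', show u * 2 * q + 1 - u ^ 2 ≠ 0 by nlinarith]
  linear_combination (-1 : ℝ) * hq2''

/-- For every real `A`,
`lim_{t→+∞} e^t·(2π·sinh t − e^{−t}A − J(2π(cosh t − 1) + e^{−t}A)) = −2A`. -/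
theorem asymptotic_isoperimetric_excess (A : ℝ) :
    Tendsto (fun t : ℝ =>
        Real.exp t * (2 * π * Real.sinh t - Real.exp (-t) * A
          - isoPerimProfile (2 * π * (Real.cosh t - 1) + Real.exp (-t) * A)))
      atTop (nhds (-2 * A)) := by
  have hπ : (0:ℝ) < π := Real.pi_pos
  have h2t : Tendsto (fun t : ℝ => Real.exp (-2 * t)) atTop (nhds 0) := by
    have h1 : Tendsto (fun t : ℝ => -2 * t) atTop atBot := by
      apply tendsto_id.const_mul_atTop_of_neg (by norm_num)
    exact Real.tendsto_exp_atBot.comp h1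
  have hmain : Tendsto (fun t : ℝ => phiAux A (Real.exp (-2 * t))) atTop (nhds (-2 * A)) := by
    rw [← phiAux_zero A]
    exact (phiAux_cont A).tendsto.comp h2t
  apply hmain.congr'
  have hsmall : Tendsto (fun t : ℝ => Real.exp (-t) * A / (2 * π)) atTop (nhds 0) := by
    have h0 : Tendsto (fun t : ℝ => Real.exp (-t)) atTop (nhds 0) := by
      exact Real.tendsto_exp_atBot.comp tendsto_neg_atTop_atBot
    have := (h0.mul_const A).div_const (2 * π)
    simpa using this
  have hev1 : ∀ᶠ t : ℝ in atTop, -(1/2 : ℝ) < Real.exp (-t) * A / (2 * π) := by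
    exact hsmall.eventually (eventually_gt_nhds (by norm_num))
  have hev2 : ∀ᶠ t : ℝ in atTop, (3/2 : ℝ) ≤ Real.cosh t := by
    filter_upwards [eventually_ge_atTop (2:ℝ)] with t ht
    have h1 : t + 1 ≤ Real.exp t := Real.add_one_le_exp t
    have h2 : 0 < Real.exp (-t) := Real.exp_pos _
    rw [Real.cosh_eq]
    linarith
  filter_upwards [hev1, hev2, eventually_gt_atTop (0:ℝ)] with t h1 h2 ht
  exact (key_eq A t ht (by linarith)).symm
end

section
/- Fix z₀ ∈ S¹ and λ ∈ ℝ, and define the Möbius map α(z) = ((2i+λ)z₀z − z₀²λ)/(λz + (2i−λ)z₀). Then α(z₀) = z₀, α'(z₀) = 1, and −i z₀ α''(z₀) = λ. Moreover, letting 𝔠(z) = i(1 + z/z₀)/(1 − z/z₀) be the Cayley map sending z₀ to ∞ and 0 to i, one has 𝔠(α(0)) = i − λ. -/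
open Complex

lemma mobius_hasDerivAt (a b c d z : ℂ) (h : c * z + d ≠ 0) :
    HasDerivAt (fun w => (a * w + b) / (c * w + d))
      ((a * d - b * c) / (c * z + d) ^ 2) z := by
  have h1 : HasDerivAt (fun w : ℂ => a * w + b) a z := by
    simpa using ((hasDerivAt_id z).const_mul a).add_const b
  have h2 : HasDerivAt (fun w : ℂ => c * w + d) c z := by
    simpa using ((hasDerivAt_id z).const_mul c).add_const d
  have := h1.fun_div h2 h
  refine this.congr_deriv ?_
  ring

lemma mobius_deriv2_hasDerivAt (a b c d z : ℂ) (h : c * z + d ≠ 0) :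
    HasDerivAt (fun w => (a * d - b * c) / (c * w + d) ^ 2)
      (-2 * c * (a * d - b * c) / (c * z + d) ^ 3) z := by
  have h2 : HasDerivAt (fun w : ℂ => (c * w + d) ^ 2) (2 * (c * z + d) * c) z := by
    have hl : HasDerivAt (fun w : ℂ => c * w + d) c z := by
      simpa using ((hasDerivAt_id z).const_mul c).add_const d
    simpa using hl.fun_pow 2
  have hne : (c * z + d) ^ 2 ≠ 0 := pow_ne_zero _ h
  have := (hasDerivAt_const z (a * d - b * c)).fun_div h2 hne
  refine this.congr_deriv ?_
  field_simp
  ring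

/-- For `z₀` on the unit circle and `λ ∈ ℝ`, the Möbius map
`α(z) = ((2i+λ)z₀z − z₀²λ)/(λz + (2i−λ)z₀)` satisfies `α(z₀) = z₀`, `α'(z₀) = 1`,
`−i z₀ α''(z₀) = λ`, and for the Cayley map `𝔠(z) = i(1 + z/z₀)/(1 − z/z₀)` one has
`𝔠(α(0)) = i − λ`. -/
theorem osculating_mobius_horocyclic_displacement (z₀ : ℂ) (hz₀ : ‖z₀‖ = 1)
    (lam : ℝ) :
    letI α : ℂ → ℂ := fun z =>
      ((2 * I + (lam : ℂ)) * z₀ * z - z₀ ^ 2 * (lam : ℂ))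
        / ((lam : ℂ) * z + (2 * I - (lam : ℂ)) * z₀)
    α z₀ = z₀
    ∧ deriv α z₀ = 1
    ∧ -I * z₀ * deriv (deriv α) z₀ = (lam : ℂ)
    ∧ I * (1 + α 0 / z₀) / (1 - α 0 / z₀) = I - (lam : ℂ) := by
  have hz : z₀ ≠ 0 := by
    intro h; rw [h] at hz₀; simp at hz₀
  set α : ℂ → ℂ := (fun z =>
      ((2 * I + (lam : ℂ)) * z₀ * z - z₀ ^ 2 * (lam : ℂ))
        / ((lam : ℂ) * z + (2 * I - (lam : ℂ)) * z₀)) with hαdef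
  set a : ℂ := (2 * I + (lam : ℂ)) * z₀ with ha
  set b : ℂ := -(z₀ ^ 2 * (lam : ℂ)) with hb
  set c : ℂ := (lam : ℂ) with hc
  set d : ℂ := (2 * I - (lam : ℂ)) * z₀ with hd
  have hα : α = fun z => (a * z + b) / (c * z + d) := by
    funext z; simp only [α, ha, hb, hc, hd]; ring_nf
  have hI : I ≠ 0 := I_ne_zero
  have hden : c * z₀ + d ≠ 0 := by
    have : c * z₀ + d = 2 * I * z₀ := by rw [hc, hd]; ring
    rw [this]
    simp [hz, hI]
  -- α z₀ = z₀
  have h1 : α z₀ = z₀ := by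
    rw [hα]
    rw [div_eq_iff hden]
    simp only [ha, hb, hc, hd]
    ring
  -- deriv α = explicit near z₀
  have hevent : ∀ᶠ z in nhds z₀, c * z + d ≠ 0 := by
    have hcont : Continuous fun z : ℂ => c * z + d := by continuity
    exact hcont.continuousAt.eventually_ne hden
  have hderiv_eq : deriv α =ᶠ[nhds z₀] fun z => (a * d - b * c) / (c * z + d) ^ 2 := by
    filter_upwards [hevent] with z hzne
    rw [hα]
    exact (mobius_hasDerivAt a b c d z hzne).deriv
  have hd1 : deriv α z₀ = (a * d - b * c) / (c * z₀ + d) ^ 2 := by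
    rw [hα]; exact (mobius_hasDerivAt a b c d z₀ hden).deriv
  have hadbc : a * d - b * c = -4 * z₀ ^ 2 := by
    simp only [ha, hb, hc, hd]
    have : I * I = -1 := Complex.I_mul_I
    ring_nf
    rw [Complex.I_sq]
    ring
  have hden2 : c * z₀ + d = 2 * I * z₀ := by rw [hc, hd]; ring
  have h2 : deriv α z₀ = 1 := by
    rw [hd1, hadbc, hden2]
    field_simp
    linear_combination (-4) * Complex.I_sq
  -- second derivative
  have hdd : deriv (deriv α) z₀ = -2 * c * (a * d - b * c) / (c * z₀ + d) ^ 3 := by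
    rw [hderiv_eq.deriv_eq]
    exact (mobius_deriv2_hasDerivAt a b c d z₀ hden).deriv
  have h3 : -I * z₀ * deriv (deriv α) z₀ = (lam : ℂ) := by
    rw [hdd, hadbc, hden2, hc]
    field_simp
    linear_combination (-4 * (lam : ℂ)) * Complex.I_sq
  -- Cayley computation
  have h4 : I * (1 + α 0 / z₀) / (1 - α 0 / z₀) = I - (lam : ℂ) := by
    have h2il : (2 * I - (lam : ℂ)) ≠ 0 := by
      intro h
      have := congrArg Complex.im h
      simp at this
    have hα0 : α 0 = -(z₀ * (lam : ℂ)) / (2 * I - (lam : ℂ)) := by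
      rw [hαdef]
      have hne : (lam : ℂ) * 0 + (2 * I - (lam : ℂ)) * z₀ ≠ 0 := by
        simp [mul_ne_zero h2il hz]
      rw [div_eq_div_iff hne h2il]
      ring
    have hq : α 0 / z₀ = -(lam : ℂ) / (2 * I - (lam : ℂ)) := by
      rw [hα0]; field_simp
    rw [hq]
    have hne2 : (1 : ℂ) - -(lam : ℂ) / (2 * I - (lam : ℂ)) ≠ 0 := by
      rw [sub_ne_zero]
      intro h
      rw [eq_div_iff h2il, one_mul] at h
      have := congrArg Complex.im h
      simp at this
    rw [div_eq_iff hne2]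
    have h2il' : I * 2 - (lam : ℂ) ≠ 0 := by rwa [mul_comm]
    field_simp
    ring
  exact ⟨h1, h2, h3, h4⟩
end
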